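/- (Block-diagonal with permutable monotone blocks implies restricted TU.) Let w be a 0-1 matrix with r rows and m columns. Suppose the row indices are partitioned into classes R₁, …, R_l and the column indices into classes C₁, …, C_l such that w_{i j} = 0 whenever i ∈ R_a and j ∈ C_b with a ≠ b, and for each a ∈ {1, …, l}, the submatrix of w with rows R_a and columns C_a, after some row and column permutations, has all rows non-decreasing, or all rows non-increasing, or all columns non-decreasing, or all columns non-increasing. Then w is restrictedly TU. -/

import Mathlib

/-- A matrix is totally unimodular if every square submatrix has determinant `0`, `1`, or `-1`. -/
def IsTU {α β : Type*} (A : Matrix α β ℤ) : Prop :=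
  ∀ (k : ℕ) (f : Fin k → α) (g : Fin k → β),
    Function.Injective f → Function.Injective g →
      (A.submatrix f g).det = 0 ∨ (A.submatrix f g).det = 1 ∨ (A.submatrix f g).det = -1

/-- A 0-1 matrix `w` is restrictedly TU if the matrix obtained by appending the all-ones row
to `w` is totally unimodular. -/
def RestrictedTU {r m : ℕ} (w : Matrix (Fin r) (Fin m) ℤ) : Prop :=
  IsTU (Matrix.fromRows w (Matrix.of fun (_ : Unit) (_ : Fin m) => (1 : ℤ)))

/-- Block-diagonal with permutable monotone blocks implies restricted TU: if the rows and
columns of the 0-1 matrix `w` are partitioned into classes (via `fR`, `fC`) such that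
`w_{i j} = 0` whenever `i` and `j` lie in different classes, and for each class `a` the
diagonal block of `w` on class `a`, after some row and column permutations, has all rows
non-decreasing, or all rows non-increasing, or all columns non-decreasing, or all columns
non-increasing, then `w` is restrictedly TU. -/


def Lam {α β : Type*} (A : Matrix α β ℤ) : Prop :=
  ∀ i i', (∀ j, A i j ≤ A i' j) ∨ (∀ j, A i' j ≤ A i j) ∨ (∀ j, A i j = 0 ∨ A i' j = 0)

lemma lam_submatrix {α β α' β' : Type*} {A : Matrix α β ℤ} (h : Lam A)
    (f : α' → α) (g : β' → β) : Lam (A.submatrix f g) := by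
  intro i i'
  rcases h (f i) (f i') with h | h | h
  · exact Or.inl fun j => h (g j)
  · exact Or.inr (Or.inl fun j => h (g j))
  · exact Or.inr (Or.inr fun j => h (g j))

lemma lam_key : ∀ (n : ℕ), ∀ (k : ℕ) (A : Matrix (Fin k) (Fin k) ℤ),
    (∀ i j, A i j = 0 ∨ A i j = 1) → Lam A → (∑ i, ∑ j, A i j) ≤ (n : ℤ) →
    A.det = 0 ∨ A.det = 1 ∨ A.det = -1 := by
  intro n
  induction n with
  | zero =>
    intro k A h01 _ hsum
    have hnn : ∀ i j, (0:ℤ) ≤ A i j := by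
      intro i j; rcases h01 i j with h | h <;> simp [h]
    have hz : ∀ i j, A i j = 0 := by
      have h0 : (∑ i, ∑ j, A i j) = 0 := le_antisymm (by exact_mod_cast hsum)
        (Finset.sum_nonneg fun i _ => Finset.sum_nonneg fun j _ => hnn i j)
      intro i j
      have h1 := (Finset.sum_eq_zero_iff_of_nonneg
        (fun i _ => Finset.sum_nonneg fun j _ => hnn i j)).mp h0 i (Finset.mem_univ i)
      exact (Finset.sum_eq_zero_iff_of_nonneg (fun j _ => hnn i j)).mp h1 j (Finset.mem_univ j)
    rcases k with _ | k
    · right; left; exact Matrix.det_fin_zero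
    · exact Or.inl (Matrix.det_eq_zero_of_row_eq_zero 0 (hz 0))
  | succ n IH =>
    intro k A h01 hlam hsum
    have hnn : ∀ i j, (0:ℤ) ≤ A i j := by
      intro i j; rcases h01 i j with h | h <;> simp [h]
    rcases k with _ | k
    · right; left; exact Matrix.det_fin_zero
    by_cases hz : ∃ i, ∀ j, A i j = 0
    · obtain ⟨i, hi⟩ := hz; exact Or.inl (Matrix.det_eq_zero_of_row_eq_zero i hi)
    by_cases he : ∃ i i', i ≠ i' ∧ A i = A i'
    · obtain ⟨i, i', hne, hEq⟩ := he; exact Or.inl (Matrix.det_zero_of_row_eq hne hEq)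
    push_neg at hz he
    -- pick row i₀ with minimal row sum
    obtain ⟨i₀, -, hmin⟩ := Finset.exists_min_image Finset.univ (fun i => ∑ j, A i j)
      ⟨0, Finset.mem_univ 0⟩
    obtain ⟨j₀, hj₀⟩ := hz i₀
    have hAj₀ : A i₀ j₀ = 1 := by rcases h01 i₀ j₀ with h | h; exacts [absurd h hj₀, h]
    have hc₀ : (1:ℤ) ≤ ∑ j, A i₀ j := by
      calc (1:ℤ) = A i₀ j₀ := hAj₀.symm
      _ ≤ ∑ j, A i₀ j := Finset.single_le_sum (fun j _ => hnn i₀ j) (Finset.mem_univ j₀)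
    have hrows_eq : ∀ i i', (∀ j, A i j ≤ A i' j) → (∑ j, A i' j) ≤ (∑ j, A i j) → A i = A i' := by
      intro i i' hle hs
      funext j
      exact (Finset.sum_eq_sum_iff_of_le (fun j _ => hle j)).mp
        (le_antisymm (Finset.sum_le_sum fun j _ => hle j) hs) j (Finset.mem_univ j)
    have htri : ∀ i, i ≠ i₀ → (∀ j, A i₀ j ≤ A i j) ∨ (∀ j, A i j = 0 ∨ A i₀ j = 0) := by
      intro i hne
      rcases hlam i₀ i with h | h | h
      · exact Or.inl h
      · exact absurd (hrows_eq i i₀ h (hmin i (Finset.mem_univ i))) (he i i₀ hne)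
      · exact Or.inr fun j => (h j).symm
    by_cases hsup : ∃ i, i ≠ i₀ ∧ (∀ j, A i₀ j ≤ A i j)
    · -- subtract row i₀ from a minimal strict superset row i₁
      obtain ⟨i₁', hi₁'⟩ := hsup
      classical
      obtain ⟨i₁, hmem, hminS⟩ := Finset.exists_min_image
        (Finset.univ.filter fun i => i ≠ i₀ ∧ ∀ j, A i₀ j ≤ A i j) (fun i => ∑ j, A i j)
        ⟨i₁', by simp [hi₁'.1, hi₁'.2]⟩
      simp only [Finset.mem_filter, Finset.mem_univ, true_and] at hmem
      obtain ⟨hne₁, hsup₁⟩ := hmem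
      set A' := A.updateRow i₁ (A i₁ + (-1 : ℤ) • A i₀) with hA'def
      have hdet : A'.det = A.det := Matrix.det_updateRow_add_smul_self A hne₁ (-1)
      have hA'row : ∀ j, A' i₁ j = A i₁ j - A i₀ j := by
        intro j; simp [hA'def, Matrix.updateRow_self, sub_eq_add_neg]
      have hA'ne : ∀ i, i ≠ i₁ → A' i = A i := fun i h => Matrix.updateRow_ne h
      have h01' : ∀ i j, A' i j = 0 ∨ A' i j = 1 := by
        intro i j
        by_cases hi : i = i₁
        · rw [hi, hA'row]
          have := hsup₁ j
          rcases h01 i₀ j with h | h <;> rcases h01 i₁ j with h' | h' <;> omega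
        · rw [hA'ne i hi]; exact h01 i j
      have hA₁sup : ∀ p, p ≠ i₁ → p ≠ i₀ → (∀ j, A i₀ j ≤ A p j) → (∀ j, A i₁ j ≤ A p j) := by
        intro p hp hp0 hps
        rcases hlam p i₁ with h | h | h
        · exfalso
          exact he p i₁ hp (hrows_eq p i₁ h (hminS p (by
            simp only [Finset.mem_filter, Finset.mem_univ, true_and]
            exact ⟨hp0, hps⟩)))
        · exact h
        · exfalso
          have h1 := hps j₀
          have h2 := hsup₁ j₀
          rcases h j₀ with h' | h' <;> omega
      have hlam' : Lam A' := by
        have main : ∀ p, p ≠ i₁ →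
            ((∀ j, A' p j ≤ A' i₁ j) ∨ (∀ j, A' i₁ j ≤ A' p j) ∨
              (∀ j, A' p j = 0 ∨ A' i₁ j = 0)) := by
          intro p hp
          rw [hA'ne p hp]
          by_cases hp0 : p = i₀
          · subst hp0
            refine Or.inr (Or.inr fun j => ?_)
            rw [hA'row]
            have h1 := hsup₁ j
            rcases h01 p j with h | h <;> rcases h01 i₁ j with h' | h' <;> omega
          · rcases htri p hp0 with hps | hdisj
            · refine Or.inr (Or.inl fun j => ?_)
              rw [hA'row]
              have h1 := hA₁sup p hp hp0 hps j
              have h2 := hnn i₀ j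
              omega
            · rcases hlam p i₁ with h | h | h
              · refine Or.inl fun j => ?_
                rw [hA'row]
                have h1 := h j
                have h2 := hsup₁ j
                rcases hdisj j with h' | h' <;> omega
              · exfalso
                have h1 := h j₀
                have h2 := hsup₁ j₀
                rcases hdisj j₀ with h' | h' <;> omega
              · refine Or.inr (Or.inr fun j => ?_)
                rw [hA'row]
                have h1 := hsup₁ j
                have h2 := hnn i₀ j
                rcases h j with h' | h' <;> omega
        intro p q
        by_cases hpq : p = q
        · exact Or.inl fun j => le_of_eq (by rw [hpq])
        by_cases hq : q = i₁
        · subst hq; exact main p hpq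
        by_cases hp : p = i₁
        · subst hp
          rcases main q hq with h | h | h
          · exact Or.inr (Or.inl h)
          · exact Or.inl h
          · exact Or.inr (Or.inr fun j => (h j).symm)
        · rw [hA'ne p hp, hA'ne q hq]; exact hlam p q
      have hsum' : (∑ i, ∑ j, A' i j) = (∑ i, ∑ j, A i j) - ∑ j, A i₀ j := by
        have h1 : (∑ i, ∑ j, A' i j) = ∑ i, Function.update (fun i => ∑ j, A i j) i₁
            ((∑ j, A i₁ j) - ∑ j, A i₀ j) i := by
          refine Finset.sum_congr rfl fun i _ => ?_
          by_cases hi : i = i₁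
          · subst hi
            rw [Function.update_self]
            rw [← Finset.sum_sub_distrib]
            exact Finset.sum_congr rfl fun j _ => hA'row j
          · rw [Function.update_of_ne hi]
            exact Finset.sum_congr rfl fun j _ => by rw [hA'ne i hi]
        rw [h1, Finset.sum_update_of_mem (Finset.mem_univ i₁)]
        have h2 : (∑ i, ∑ j, A i j) = (∑ j, A i₁ j) +
            ∑ i ∈ Finset.univ \ {i₁}, ∑ j, A i j := by
          rw [Finset.sdiff_singleton_eq_erase, ← Finset.add_sum_erase _ _ (Finset.mem_univ i₁)]
        rw [h2]; ring
      have hbound : (∑ i, ∑ j, A' i j) ≤ (n : ℤ) := by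
        rw [hsum']
        have : ((n:ℤ) + 1) = ((n+1 : ℕ) : ℤ) := by push_cast; ring
        omega
      have := IH (k+1) A' h01' hlam' hbound
      rwa [hdet] at this
    · -- no superset: every other row is disjoint from row i₀; expand along column j₀
      push_neg at hsup
      have hcol : ∀ i, i ≠ i₀ → A i j₀ = 0 := by
        intro i hne
        rcases htri i hne with h | h
        · obtain ⟨j, hj⟩ := hsup i hne
          exact absurd (h j) (not_le.mpr hj)
        · rcases h j₀ with h' | h'
          · exact h'
          · exact absurd h' (by rw [hAj₀]; norm_num)
      rw [Matrix.det_succ_column A j₀,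
        Finset.sum_eq_single_of_mem i₀ (Finset.mem_univ i₀)
          (fun b _ hb => by rw [hcol b hb]; ring)]
      have hminor := IH k (A.submatrix i₀.succAbove j₀.succAbove)
        (fun i j => h01 _ _) (lam_submatrix hlam _ _) ?_
      · rw [hAj₀, mul_one]
        rcases neg_one_pow_eq_or ℤ (↑i₀ + ↑j₀) with hs | hs <;>
          rcases hminor with h | h | h <;> rw [Matrix.submatrix] at h <;>
          rw [hs] <;> simp [Matrix.submatrix, h]
      · -- sum bound for the minor
        have h1 : (∑ i, ∑ j, A i j) = (∑ j, A i₀ j) +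
            ∑ i' : Fin k, ∑ j, A (i₀.succAbove i') j :=
          Fin.sum_univ_succAbove (fun i => ∑ j, A i j) i₀
        have h2 : ∀ x, (∑ j, A x j) = A x j₀ + ∑ j' : Fin k, A x (j₀.succAbove j') :=
          fun x => Fin.sum_univ_succAbove (fun j => A x j) j₀
        have h3 : (∑ i' : Fin k, ∑ j' : Fin k, A (i₀.succAbove i') (j₀.succAbove j'))
            ≤ ∑ i' : Fin k, ∑ j, A (i₀.succAbove i') j := by
          refine Finset.sum_le_sum fun i' _ => ?_
          rw [h2 (i₀.succAbove i')]
          exact le_add_of_nonneg_left (hnn _ _)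
        have h4 : ((n:ℤ) + 1) = ((n+1 : ℕ) : ℤ) := by push_cast; ring
        have h5 : (∑ i' : Fin k, ∑ j' : Fin k,
            (A.submatrix i₀.succAbove j₀.succAbove) i' j')
            = ∑ i' : Fin k, ∑ j' : Fin k, A (i₀.succAbove i') (j₀.succAbove j') := rfl
        rw [h5]
        omega

lemma lam_isTU {α β : Type*} (A : Matrix α β ℤ)
    (h01 : ∀ i j, A i j = 0 ∨ A i j = 1) (hlam : Lam A) : IsTU A := by
  intro k f g _ _
  exact lam_key (∑ i, ∑ j, (A.submatrix f g) i j).toNat k (A.submatrix f g)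
    (fun i j => h01 _ _) (lam_submatrix hlam f g) (Int.self_le_toNat _)


theorem restrictedTU_of_blockDiagMonotone {r m : ℕ} (w : Matrix (Fin r) (Fin m) ℤ)
    (h01 : ∀ i j, w i j = 0 ∨ w i j = 1)
    (l : ℕ) (fR : Fin r → Fin l) (fC : Fin m → Fin l)
    (hblock : ∀ (i : Fin r) (j : Fin m), fR i ≠ fC j → w i j = 0)
    (hmono : ∀ a : Fin l,
      ∃ (σ : Equiv.Perm {i : Fin r // fR i = a}) (τ : Equiv.Perm {j : Fin m // fC j = a}),
        (∀ (i : {i : Fin r // fR i = a}) (j j' : {j : Fin m // fC j = a}), j ≤ j' →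
          w (σ i) (τ j) ≤ w (σ i) (τ j')) ∨
        (∀ (i : {i : Fin r // fR i = a}) (j j' : {j : Fin m // fC j = a}), j ≤ j' →
          w (σ i) (τ j') ≤ w (σ i) (τ j)) ∨
        (∀ (j : {j : Fin m // fC j = a}) (i i' : {i : Fin r // fR i = a}), i ≤ i' →
          w (σ i) (τ j) ≤ w (σ i') (τ j)) ∨
        (∀ (j : {j : Fin m // fC j = a}) (i i' : {i : Fin r // fR i = a}), i ≤ i' →
          w (σ i') (τ j) ≤ w (σ i) (τ j))) :
    RestrictedTU w := by
  have hle1 : ∀ i j, w i j ≤ 1 := fun i j => by rcases h01 i j with h | h <;> simp [h]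
  have hnn : ∀ i j, (0:ℤ) ≤ w i j := fun i j => by rcases h01 i j with h | h <;> simp [h]
  -- rows within one block are nested
  have hnest : ∀ (i i' : Fin r), fR i = fR i' →
      (∀ j, w i j ≤ w i' j) ∨ (∀ j, w i' j ≤ w i j) := by
    intro i i' hEq
    obtain ⟨σ, τ, hcase⟩ := hmono (fR i)
    have hia' : fR i' = fR i := hEq.symm
    set p := σ.symm ⟨i, rfl⟩ with hpdef
    set q := σ.symm ⟨i', hia'⟩ with hqdef
    have hp : ((σ p : {x // fR x = fR i}) : Fin r) = i := by rw [hpdef, Equiv.apply_symm_apply]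
    have hq : ((σ q : {x // fR x = fR i}) : Fin r) = i' := by rw [hqdef, Equiv.apply_symm_apply]
    have hmemC : ∀ (x : Fin r) (j : Fin m), w x j ≠ 0 → fC j = fR x := by
      intro x j hx
      by_contra hc
      exact hx (hblock x j fun hh => hc hh.symm)
    rcases hcase with hc | hc | hc | hc
    · -- rows nondecreasing in column index
      by_contra hcon
      push_neg at hcon
      obtain ⟨⟨j1, hj1⟩, ⟨j2, hj2⟩⟩ := hcon
      have e1 : w i j1 = 1 ∧ w i' j1 = 0 := by
        rcases h01 i j1 with h | h <;> rcases h01 i' j1 with h' | h' <;> omega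
      have e2 : w i j2 = 0 ∧ w i' j2 = 1 := by
        rcases h01 i j2 with h | h <;> rcases h01 i' j2 with h' | h' <;> omega
      have hm1 : fC j1 = fR i := hmemC i j1 (by rw [e1.1]; norm_num)
      have hm2 : fC j2 = fR i := by rw [hmemC i' j2 (by rw [e2.2]; norm_num), hia']
      set q1 := τ.symm ⟨j1, hm1⟩ with hq1def
      set q2 := τ.symm ⟨j2, hm2⟩ with hq2def
      have ht1 : ((τ q1 : {x // fC x = fR i}) : Fin m) = j1 := by
        rw [hq1def, Equiv.apply_symm_apply]
      have ht2 : ((τ q2 : {x // fC x = fR i}) : Fin m) = j2 := by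
        rw [hq2def, Equiv.apply_symm_apply]
      rcases le_total q1 q2 with hle | hle
      · have := hc p q1 q2 hle
        rw [hp, ht1, ht2] at this
        omega
      · have := hc q q2 q1 hle
        rw [hq, ht1, ht2] at this
        omega
    · -- rows nonincreasing in column index
      by_contra hcon
      push_neg at hcon
      obtain ⟨⟨j1, hj1⟩, ⟨j2, hj2⟩⟩ := hcon
      have e1 : w i j1 = 1 ∧ w i' j1 = 0 := by
        rcases h01 i j1 with h | h <;> rcases h01 i' j1 with h' | h' <;> omega
      have e2 : w i j2 = 0 ∧ w i' j2 = 1 := by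
        rcases h01 i j2 with h | h <;> rcases h01 i' j2 with h' | h' <;> omega
      have hm1 : fC j1 = fR i := hmemC i j1 (by rw [e1.1]; norm_num)
      have hm2 : fC j2 = fR i := by rw [hmemC i' j2 (by rw [e2.2]; norm_num), hia']
      set q1 := τ.symm ⟨j1, hm1⟩ with hq1def
      set q2 := τ.symm ⟨j2, hm2⟩ with hq2def
      have ht1 : ((τ q1 : {x // fC x = fR i}) : Fin m) = j1 := by
        rw [hq1def, Equiv.apply_symm_apply]
      have ht2 : ((τ q2 : {x // fC x = fR i}) : Fin m) = j2 := by
        rw [hq2def, Equiv.apply_symm_apply]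
      rcases le_total q1 q2 with hle | hle
      · have := hc q q1 q2 hle
        rw [hq, ht1, ht2] at this
        omega
      · have := hc p q2 q1 hle
        rw [hp, ht1, ht2] at this
        omega
    · -- columns nondecreasing in row index
      rcases le_total p q with hle | hle
      · refine Or.inl fun j => ?_
        by_cases hj : fC j = fR i
        · have := hc (τ.symm ⟨j, hj⟩) p q hle
          rw [hp, hq, Equiv.apply_symm_apply] at this
          exact this
        · rw [hblock i j fun hh => hj hh.symm,
            hblock i' j (by rw [hia']; exact fun hh => hj hh.symm)]
      · refine Or.inr fun j => ?_
        by_cases hj : fC j = fR i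
        · have := hc (τ.symm ⟨j, hj⟩) q p hle
          rw [hp, hq, Equiv.apply_symm_apply] at this
          exact this
        · rw [hblock i j fun hh => hj hh.symm,
            hblock i' j (by rw [hia']; exact fun hh => hj hh.symm)]
    · -- columns nonincreasing in row index
      rcases le_total p q with hle | hle
      · refine Or.inr fun j => ?_
        by_cases hj : fC j = fR i
        · have := hc (τ.symm ⟨j, hj⟩) p q hle
          rw [hp, hq, Equiv.apply_symm_apply] at this
          exact this
        · rw [hblock i j fun hh => hj hh.symm,
            hblock i' j (by rw [hia']; exact fun hh => hj hh.symm)]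
      · refine Or.inl fun j => ?_
        by_cases hj : fC j = fR i
        · have := hc (τ.symm ⟨j, hj⟩) q p hle
          rw [hp, hq, Equiv.apply_symm_apply] at this
          exact this
        · rw [hblock i j fun hh => hj hh.symm,
            hblock i' j (by rw [hia']; exact fun hh => hj hh.symm)]
  set M := Matrix.fromRows w (Matrix.of fun (_ : Unit) (_ : Fin m) => (1:ℤ)) with hMdef
  have hM01 : ∀ i j, M i j = 0 ∨ M i j = 1 := by
    rintro (i | u) j
    · exact h01 i j
    · right; rfl
  have hlamM : Lam M := by
    rintro (i | u) (i' | u')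
    · by_cases hb : fR i = fR i'
      · rcases hnest i i' hb with h | h
        · exact Or.inl fun j => h j
        · exact Or.inr (Or.inl fun j => h j)
      · refine Or.inr (Or.inr fun j => ?_)
        by_cases hj : fC j = fR i
        · exact Or.inr (hblock i' j (by rw [hj]; exact fun hh => hb hh.symm))
        · exact Or.inl (hblock i j fun hh => hj hh.symm)
    · exact Or.inl fun j => hle1 i j
    · exact Or.inr (Or.inl fun j => hle1 i' j)
    · exact Or.inl fun j => le_refl _
  exact lam_isTU M hM01 hlamM
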